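/- Let $G$ be the subgraph of $K_m^{K_n}$ induced by constant and injective maps ($m > n \geq 3$), and let $\mu = \bigcup_i \mu_i$ be the element matching defined by successively matching simplices with the constant maps $\langle 1 \rangle, \langle 2 \rangle, \dots, \langle m \rangle$: $S_i = \{\sigma \in S'_{i-1} : \langle i \rangle \notin \sigma, \sigma \cup \langle i \rangle \in S'_{i-1}\}$, $\mu_i(\sigma) = \sigma \cup \langle i \rangle$, $S'_i = S'_{i-1} \setminus (S_i \cup \mu_i(S_i))$ with $S'_0$ the full face poset. Then $\mu$ is an acyclic matching on the face poset of $\mathcal{N}(G)$. -/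

import Mathlib

/-- Adjacency in the exponential graph `K_m^{K_n}`. -/
def ExpAdj (n m : ℕ) (f g : Fin n → Fin m) : Prop :=
  ∀ i j : Fin n, i ≠ j → f i ≠ g j

/-- Vertices of the fold `G` of `K_m^{K_n}`: constant maps and injective maps. -/
def GVert (n m : ℕ) (f : Fin n → Fin m) : Prop :=
  (∃ x, ∀ i, f i = x) ∨ Function.Injective f

/-- The constant map `⟨k+1⟩` (colors `1,…,m` are represented by `0,…,m-1`). -/
def cst (n m : ℕ) [NeZero m] (k : ℕ) : Fin n → Fin m := fun _ => (Fin.ofNat m k)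

/-- Nonempty faces of the neighborhood complex `𝒩(G)` of the fold `G`. -/
def NFaceG (n m : ℕ) (σ : Finset (Fin n → Fin m)) : Prop :=
  (∀ f ∈ σ, GVert n m f) ∧ ∃ h, GVert n m h ∧ ∀ f ∈ σ, ExpAdj n m f h

/-- `Sp n m k` is the set `S'_{k}` of the paper (with `S'_0` the full face poset
of `𝒩(G)`): the faces still unmatched after matching with the constant maps
`⟨1⟩, …, ⟨k⟩`. -/
def Sp (n m : ℕ) [NeZero m] : ℕ → Set (Finset (Fin n → Fin m))
  | 0 => {σ | σ.Nonempty ∧ NFaceG n m σ}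
  | k + 1 =>
      Sp n m k \
        ({σ | σ ∈ Sp n m k ∧ cst n m k ∉ σ ∧ insert (cst n m k) σ ∈ Sp n m k} ∪
          (insert (cst n m k)) ''
            {σ | σ ∈ Sp n m k ∧ cst n m k ∉ σ ∧ insert (cst n m k) σ ∈ Sp n m k})

/-- `MSet n m k` is the set `S_{k+1}` of the paper: the faces matched (by adding
the constant map `⟨k+1⟩`) at stage `k+1`. -/
def MSet (n m : ℕ) [NeZero m] (k : ℕ) : Set (Finset (Fin n → Fin m)) :=
  {σ | σ ∈ Sp n m k ∧ cst n m k ∉ σ ∧ insert (cst n m k) σ ∈ Sp n m k}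

/-- A face of `𝒩(G)` is critical when it is unmatched by the matching `μ`. -/
def Critical (n m : ℕ) [NeZero m] (σ : Finset (Fin n → Fin m)) : Prop :=
  σ ∈ Sp n m 0 ∧ ∀ k < m, σ ∉ MSet n m k ∧ ¬ ∃ τ ∈ MSet n m k, σ = insert (cst n m k) τ

section Aux
variable {n m : ℕ} [NeZero m]

lemma sp_succ_subset (k : ℕ) : Sp n m (k+1) ⊆ Sp n m k := fun _ h => h.1

lemma sp_mono {k k' : ℕ} (h : k ≤ k') : Sp n m k' ⊆ Sp n m k := by
  induction h with
  | refl => exact fun _ h => h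
  | step _ ih => exact fun σ hσ => ih (sp_succ_subset _ hσ)

lemma mset_not_sp {k : ℕ} {σ : Finset (Fin n → Fin m)} (h : σ ∈ MSet n m k) :
    σ ∉ Sp n m (k+1) := fun hσ => hσ.2 (Or.inl h)

lemma mset_insert_not_sp {k : ℕ} {σ : Finset (Fin n → Fin m)} (h : σ ∈ MSet n m k) :
    insert (cst n m k) σ ∉ Sp n m (k+1) := fun hσ => hσ.2 (Or.inr ⟨σ, h, rfl⟩)

end Aux

/-- The element matching `μ = ⋃ μᵢ` obtained by successively matching faces of
`𝒩(G)` with the constant maps `⟨1⟩, …, ⟨m⟩` is a well-defined acyclic matching on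
the face poset of `𝒩(G)`: each matched face is covered by its partner, distinct
matched faces have distinct partners, no face is simultaneously matched up and
down, and there is no alternating cycle
`μ(σ₁) ≻ σ₂, μ(σ₂) ≻ σ₃, …, μ(σ_t) ≻ σ₁` with `t ≥ 2` and the `σᵢ` distinct. -/
theorem element_matching_acyclic (n m : ℕ) [NeZero m] (hn : 3 ≤ n) (hnm : n < m) :
    (∀ k < m, ∀ σ ∈ MSet n m k, σ ⋖ insert (cst n m k) σ ∧
      insert (cst n m k) σ ∈ Sp n m 0) ∧
    (∀ k < m, ∀ k' < m, ∀ σ ∈ MSet n m k, ∀ σ' ∈ MSet n m k',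
      insert (cst n m k) σ = insert (cst n m k') σ' → k = k' ∧ σ = σ') ∧
    (∀ k < m, ∀ k' < m, ∀ σ ∈ MSet n m k, ¬ ∃ τ ∈ MSet n m k', σ = insert (cst n m k') τ) ∧
    ¬ ∃ (t : ℕ) (f : ℕ → Finset (Fin n → Fin m)) (j : ℕ → ℕ), 2 ≤ t ∧
        (∀ i < t, j i < m ∧ f i ∈ MSet n m (j i)) ∧
        (∀ i < t, ∀ i' < t, f i = f i' → i = i') ∧
        (∀ i < t, f ((i + 1) % t) ⋖ insert (cst n m (j i)) (f i)) := by
  refine ⟨?_, ?_, ?_, ?_⟩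
  · -- part 1
    intro k _ σ hσ
    exact ⟨Finset.covBy_insert hσ.2.1, sp_mono (Nat.zero_le k) hσ.2.2⟩
  · -- part 2
    intro k _ k' _ σ hσ σ' hσ' heq
    have hkk' : k = k' := by
      rcases lt_trichotomy k k' with h | h | h
      · exact absurd (heq ▸ sp_mono h hσ'.2.2) (mset_insert_not_sp hσ)
      · exact h
      · exfalso
        apply mset_insert_not_sp hσ'
        rw [← heq]
        exact sp_mono h hσ.2.2
    subst hkk'
    refine ⟨rfl, ?_⟩
    have := congrArg (fun s => Finset.erase s (cst n m k)) heq
    simpa [Finset.erase_insert hσ.2.1, Finset.erase_insert hσ'.2.1] using this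
  · -- part 3
    intro k hk k' hk' σ hσ ⟨τ, hτ, hστ⟩
    rcases lt_trichotomy k' k with h | h | h
    · exact (mset_insert_not_sp hτ) (hστ ▸ sp_mono h hσ.1)
    · subst h
      exact hσ.2.1 (hστ ▸ Finset.mem_insert_self _ _)
    · exact (mset_not_sp hσ) (hστ ▸ sp_mono h hτ.2.2 : σ ∈ Sp n m (k+1))
  · -- part 4: acyclicity
    rintro ⟨t, f, j, ht, hM, hinj, hcov⟩
    obtain ⟨i0, hi0t, hi0min⟩ :=
      Finset.exists_min_image (Finset.range t) j ⟨0, Finset.mem_range.mpr (by omega)⟩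
    rw [Finset.mem_range] at hi0t
    set k := j i0 with hk
    have hmin : ∀ i < t, k ≤ j i := fun i hi => hi0min i (Finset.mem_range.mpr hi)
    -- key step: if cst k ∈ f b then cst k ∈ f ((b+1)%t)
    have step : ∀ b < t, cst n m k ∈ f b → cst n m k ∈ f ((b + 1) % t) := by
      intro b hb hbk
      have hjb : k < j b := by
        rcases Nat.lt_or_ge k (j b) with h | h
        · exact h
        · exfalso
          have : j b = k := le_antisymm h (hmin b hb)
          exact (hM b hb).2.2.1 (this ▸ hbk)
      have hb' : (b + 1) % t < t := Nat.mod_lt _ (by omega)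
      obtain ⟨a, ha, hins⟩ := Finset.covBy_iff_exists_insert.mp (hcov b hb)
      by_contra hnot
      have hak : a = cst n m k := by
        have : cst n m k ∈ insert a (f ((b + 1) % t)) := by
          rw [hins]; exact Finset.mem_insert_of_mem hbk
        rcases Finset.mem_insert.mp this with h | h
        · exact h.symm
        · exact absurd h hnot
      subst hak
      -- f ((b+1)%t) would have been matched at stage k
      have h1 : f ((b + 1) % t) ∈ Sp n m k :=
        sp_mono (hmin _ hb') (hM _ hb').2.1
      have h2 : insert (cst n m k) (f ((b + 1) % t)) ∈ Sp n m k := by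
        rw [hins]; exact sp_mono (le_of_lt hjb) (hM b hb).2.2.2
      have hmem : f ((b + 1) % t) ∈ MSet n m k := ⟨h1, ha, h2⟩
      have h3 : insert (cst n m k) (f ((b + 1) % t)) ∈ Sp n m (k + 1) := by
        rw [hins]; exact sp_mono hjb (hM b hb).2.2.2
      exact mset_insert_not_sp hmem h3
    -- base: cst k ∈ f ((i0+1)%t)
    have base : cst n m k ∈ f ((i0 + 1) % t) := by
      have hb' : (i0 + 1) % t < t := Nat.mod_lt _ (by omega)
      obtain ⟨a, ha, hins⟩ := Finset.covBy_iff_exists_insert.mp (hcov i0 hi0t)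
      by_contra hnot
      have hak : a = cst n m k := by
        have : cst n m k ∈ insert a (f ((i0 + 1) % t)) := by
          rw [hins]; exact Finset.mem_insert_self _ _
        rcases Finset.mem_insert.mp this with h | h
        · exact h.symm
        · exact absurd h hnot
      subst hak
      have hfi0 : cst n m k ∉ f i0 := (hM i0 hi0t).2.2.1
      have : f ((i0 + 1) % t) = f i0 := by
        have := congrArg (fun s => Finset.erase s (cst n m k)) hins
        simpa [← hk, Finset.erase_insert hnot, Finset.erase_insert hfi0] using this
      have heqi : (i0 + 1) % t = i0 := hinj _ hb' _ hi0t this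
      rcases Nat.lt_or_ge (i0 + 1) t with h | h
      · rw [Nat.mod_eq_of_lt h] at heqi; omega
      · have ht' : i0 + 1 = t := by omega
        rw [ht', Nat.mod_self] at heqi; omega
    -- propagate around the cycle
    have prop : ∀ s, cst n m k ∈ f ((i0 + 1 + s) % t) := by
      intro s
      induction s with
      | zero => simpa using base
      | succ s ih =>
          have hlt : (i0 + 1 + s) % t < t := Nat.mod_lt _ (by omega)
          have := step _ hlt ih
          rwa [Nat.mod_add_mod, show i0 + 1 + s + 1 = i0 + 1 + (s + 1) by ring] at this
    have := prop (t - 1)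
    rw [show i0 + 1 + (t - 1) = i0 + t by omega, Nat.add_mod_right,
      Nat.mod_eq_of_lt hi0t] at this
    exact (hM i0 hi0t).2.2.1 this
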